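/- Let r ≥ 1, let k ∈ {0, 1, …, r−1}, and let u_1, …, u_r, a_1, …, a_k ∈ Θ be homogeneous polynomials of degree N with u_1, …, u_r pairwise distinct. Then, with denominators cleared, (∏_{1 ≤ p < q ≤ r} (u_q − u_p)) · E(a_1⋯a_k · ∏_{i=1}^r (1 − u_i)^{-1}) = a_1⋯a_k · Σ_{i=1}^r (−1)^{r−i} · u_i^{r−k−1} · exp(q·u_i) · ∏_{1 ≤ p < q ≤ r, p ≠ i, q ≠ i} (u_q − u_p), where exp(q·u) denotes Σ_{j ≥ 0} (q^j / j!) · u^j. -/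

import Mathlib

variable {σ : Type*}

/-- Total degree of a monomial. -/
def monDeg (d : σ →₀ ℕ) : ℕ := d.sum fun _ n => n

/-- `Θ`: series whose coefficients vanish in degrees not divisible by `N`. -/
def InTheta (N : ℕ) (f : MvPowerSeries σ ℚ) : Prop :=
  ∀ d : σ →₀ ℕ, ¬ (N ∣ monDeg d) → MvPowerSeries.coeff (R := ℚ) d f = 0

/-- `f^(k)`: homogeneous component of total degree `N * k`. -/
noncomputable def homComp (N : ℕ) (f : MvPowerSeries σ ℚ) (k : ℕ) : MvPowerSeries σ ℚ :=
  fun d => if monDeg d = N * k then MvPowerSeries.coeff (R := ℚ) d f else 0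

/-- The operation `⊙`: `f ⊙ g = Σ_{k,ℓ} C(k+ℓ,k) f^(k) g^(ℓ)`, defined coefficientwise
(at a monomial of total degree `m`, only indices `k, ℓ ≤ m` can contribute, for `N ≥ 1`). -/
noncomputable def odot (N : ℕ) (f g : MvPowerSeries σ ℚ) : MvPowerSeries σ ℚ :=
  fun d => ∑ k ∈ Finset.range (monDeg d + 1), ∑ l ∈ Finset.range (monDeg d + 1),
    ((k + l).choose k : ℚ) * MvPowerSeries.coeff (R := ℚ) d (homComp N f k * homComp N g l)

/-- The `E`-transform: `E f = Σ_k (q^k / k!) f^(k)`. -/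
noncomputable def Etrans (N : ℕ) (f : MvPowerSeries σ ℚ) :
    PowerSeries (MvPowerSeries σ ℚ) :=
  PowerSeries.mk fun k => (k.factorial : ℚ)⁻¹ • homComp N f k

/-- `exp(q·u) = Σ_k (q^k / k!) u^k`. -/
noncomputable def expQ (u : MvPowerSeries σ ℚ) : PowerSeries (MvPowerSeries σ ℚ) :=
  PowerSeries.mk fun k => (k.factorial : ℚ)⁻¹ • u ^ k

/-- A homogeneous polynomial of degree `N`: finitely many nonzero coefficients,
all in total degree exactly `N`. -/
def IsHomogDeg (N : ℕ) (a : MvPowerSeries σ ℚ) : Prop :=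
  {d : σ →₀ ℕ | MvPowerSeries.coeff (R := ℚ) d a ≠ 0}.Finite ∧
    ∀ d : σ →₀ ℕ, MvPowerSeries.coeff (R := ℚ) d a ≠ 0 → monDeg d = N

/-- Iterated `⊙`-product of a nonempty list. -/
noncomputable def odotList (N : ℕ) : List (MvPowerSeries σ ℚ) → MvPowerSeries σ ℚ
  | [] => 1
  | [f] => f
  | f :: g :: rest => odot N f (odotList N (g :: rest))


section S8core

open Finset Matrix

lemma prod_pairs_eq {M : Type*} [CommMonoid M] {n : ℕ} (f : Fin n → Fin n → M) :
    (∏ p ∈ Finset.univ.filter (fun p : Fin n × Fin n => p.1 < p.2), f p.1 p.2)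
      = ∏ i : Fin n, ∏ j ∈ Finset.Ioi i, f i j := by
  rw [Finset.prod_sigma']
  symm
  apply Finset.prod_bij (fun (x : Σ _ : Fin n, Fin n) (_ : x ∈ _) => (x.1, x.2))
  · intro x hx
    simp only [Finset.mem_sigma, Finset.mem_univ, Finset.mem_Ioi, true_and] at hx
    simp [hx]
  · intro a ha b hb h
    rw [Prod.mk.injEq] at h
    exact Sigma.ext h.1 (heq_of_eq h.2)
  · intro p hp
    simp only [Finset.mem_filter, Finset.mem_univ, true_and] at hp
    exact ⟨⟨p.1, p.2⟩, by simp [Finset.mem_sigma, Finset.mem_Ioi, hp], rfl⟩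
  · intro x hx; rfl

lemma prod_pairs_succAbove {M : Type*} [CommMonoid M] {n : ℕ} (i : Fin (n+1))
    (f : Fin (n+1) → Fin (n+1) → M) :
    (∏ p ∈ Finset.univ.filter
        (fun p : Fin (n+1) × Fin (n+1) => p.1 < p.2 ∧ p.1 ≠ i ∧ p.2 ≠ i), f p.1 p.2)
      = ∏ p ∈ Finset.univ.filter (fun p : Fin n × Fin n => p.1 < p.2),
          f (i.succAbove p.1) (i.succAbove p.2) := by
  symm
  apply Finset.prod_bij (fun (p : Fin n × Fin n) (_ : p ∈ _) => (i.succAbove p.1, i.succAbove p.2))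
  · intro p hp
    simp only [Finset.mem_filter, Finset.mem_univ, true_and] at hp ⊢
    exact ⟨Fin.succAbove_lt_succAbove_iff.2 hp, i.succAbove_ne p.1, i.succAbove_ne p.2⟩
  · intro a ha b hb h
    rw [Prod.mk.injEq] at h
    exact Prod.ext (Fin.succAbove_right_injective h.1) (Fin.succAbove_right_injective h.2)
  · intro p hp
    simp only [Finset.mem_filter, Finset.mem_univ, true_and] at hp
    obtain ⟨h1, h2, h3⟩ := hp
    obtain ⟨x, hx⟩ := Fin.exists_succAbove_eq h2
    obtain ⟨y, hy⟩ := Fin.exists_succAbove_eq h3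
    exact ⟨(x, y), by simp only [Finset.mem_filter, Finset.mem_univ, true_and]; exact (Fin.succAbove_lt_succAbove_iff (p := i)).1 (by rw [hx, hy]; exact h1), by simp [hx, hy]⟩
  · intro x hx; rfl

lemma neg_one_pow_add_eq_sub {R : Type*} [Monoid R] [HasDistribNeg R] {i n : ℕ} (h : i ≤ n) :
    (-1 : R) ^ (n + i) = (-1 : R) ^ (n - i) := by
  conv_lhs => rw [show n + i = (n - i) + 2 * i by omega]
  rw [pow_add, pow_mul, neg_one_sq, one_pow, mul_one]

lemma core_alternant {R : Type*} [CommRing R] (n : ℕ) (u : Fin (n+1) → R) (H : ℕ → R)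
    (hH0 : H 0 = 1)
    (hrec : ∀ t, 0 < t →
      (∑ s ∈ (Finset.univ : Finset (Fin (n+1))).powerset,
        if s.card ≤ t then (∏ j ∈ s, (-u j)) * H (t - s.card) else 0) = 0)
    (s : ℕ) :
    (∑ i : Fin (n+1), (-1:R)^(n - (i:ℕ)) * u i ^ s *
        ∏ p ∈ Finset.univ.filter
          (fun p : Fin (n+1) × Fin (n+1) => p.1 < p.2 ∧ p.1 ≠ i ∧ p.2 ≠ i), (u p.2 - u p.1))
      = if s < n then 0 else
        (∏ p ∈ Finset.univ.filter (fun p : Fin (n+1) × Fin (n+1) => p.1 < p.2), (u p.2 - u p.1))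
          * H (s - n) := by
  classical
  have detEq : ∀ s : ℕ,
      (∑ i : Fin (n+1), (-1:R)^(n - (i:ℕ)) * u i ^ s *
        ∏ p ∈ Finset.univ.filter
          (fun p : Fin (n+1) × Fin (n+1) => p.1 < p.2 ∧ p.1 ≠ i ∧ p.2 ≠ i), (u p.2 - u p.1))
      = Matrix.det (Matrix.of fun j i : Fin (n+1) =>
          u i ^ (if j = Fin.last n then s else (j:ℕ))) := by
    intro s
    rw [Matrix.det_succ_row _ (Fin.last n)]
    apply Finset.sum_congr rfl
    intro i _
    have hminor : (Matrix.of fun j i : Fin (n+1) =>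
          u i ^ (if j = Fin.last n then s else (j:ℕ))).submatrix
            (Fin.last n).succAbove i.succAbove
        = (Matrix.vandermonde (fun j => u (i.succAbove j)))ᵀ := by
      ext j' i'
      have h1 : Fin.castSucc j' ≠ Fin.last n := (Fin.castSucc_lt_last j').ne
      simp [Matrix.submatrix_apply, Fin.succAbove_last, Matrix.vandermonde_apply,
        Matrix.transpose_apply, h1]
    rw [hminor, Matrix.det_transpose, Matrix.det_vandermonde]
    rw [prod_pairs_succAbove i (fun a b => u b - u a),
      prod_pairs_eq (fun a b => u (i.succAbove b) - u (i.succAbove a))]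
    simp only [Matrix.of_apply, if_true]
    rw [Fin.val_last, neg_one_pow_add_eq_sub (Fin.is_le i)]
  induction s using Nat.strong_induction_on with
  | _ s IH =>
  rcases lt_trichotomy s n with hs | hs | hs
  · rw [if_pos hs, detEq]
    apply Matrix.det_zero_of_row_eq (i := (⟨s, by omega⟩ : Fin (n+1))) (j := Fin.last n)
    · intro h
      have := congrArg Fin.val h
      simp only [Fin.val_last] at this
      omega
    · funext i
      have h2 : (⟨s, by omega⟩ : Fin (n+1)) ≠ Fin.last n := by
        intro h
        have := congrArg Fin.val h
        simp only [Fin.val_last] at this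
        omega
      simp [Matrix.of_apply, h2]
  · have hM : (Matrix.of fun j i : Fin (n+1) =>
          u i ^ (if j = Fin.last n then s else (j:ℕ)))
        = (Matrix.vandermonde u)ᵀ := by
      ext j i
      by_cases h : j = Fin.last n
      · subst h
        simp [Matrix.vandermonde_apply, Matrix.transpose_apply, hs]
      · simp [Matrix.vandermonde_apply, Matrix.transpose_apply, h]
    rw [detEq s, hM, Matrix.det_transpose, Matrix.det_vandermonde, if_neg (by omega), hs,
      Nat.sub_self, hH0, mul_one, prod_pairs_eq (fun a b => u b - u a)]
  · -- s > n
    have hst : s = (n+1) + (s - (n+1)) := by omega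
    set t := s - (n+1) with ht
    set E := ((Finset.univ : Finset (Fin (n+1))).powerset).erase ∅ with hE
    have key : ∀ i : Fin (n+1), u i ^ (n+1)
        = - ∑ s' ∈ E, (∏ j ∈ s', (-u j)) * u i ^ (n + 1 - s'.card) := by
      intro i
      have h0 : (0:R) = ∑ s' ∈ (Finset.univ : Finset (Fin (n+1))).powerset,
          (∏ j ∈ s', (-u j)) * u i ^ (n + 1 - s'.card) := by
        have h1 : (0:R) = ∏ j : Fin (n+1), (-u j + u i) := by
          symm
          apply Finset.prod_eq_zero (Finset.mem_univ i)
          ring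
        rw [Finset.prod_add] at h1
        rw [h1]
        apply Finset.sum_congr rfl
        intro s' hs'
        rw [Finset.prod_const]
        congr 2
        rw [Finset.card_sdiff_of_subset (Finset.mem_powerset.1 hs'), Finset.card_univ, Fintype.card_fin]
      have h2 := Finset.sum_erase_add _ (fun s' : Finset (Fin (n+1)) =>
          (∏ j ∈ s', (-u j)) * u i ^ (n + 1 - s'.card))
          (Finset.mem_powerset.2 (Finset.empty_subset (Finset.univ : Finset (Fin (n+1)))))
      rw [← h0] at h2
      simp only [Finset.prod_empty, Finset.card_empty, Nat.sub_zero, one_mul] at h2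
      rw [← hE] at h2
      linear_combination h2
    have step1 : ∀ i : Fin (n+1),
        (-1:R)^(n - (i:ℕ)) * u i ^ s *
          (∏ p ∈ Finset.univ.filter
            (fun p : Fin (n+1) × Fin (n+1) => p.1 < p.2 ∧ p.1 ≠ i ∧ p.2 ≠ i), (u p.2 - u p.1))
        = ∑ s' ∈ E, -((∏ j ∈ s', (-u j)) *
            ((-1:R)^(n - (i:ℕ)) * u i ^ ((n + 1 - s'.card) + t) *
              ∏ p ∈ Finset.univ.filter
                (fun p : Fin (n+1) × Fin (n+1) => p.1 < p.2 ∧ p.1 ≠ i ∧ p.2 ≠ i),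
                  (u p.2 - u p.1))) := by
      intro i
      set Vi := ∏ p ∈ Finset.univ.filter
          (fun p : Fin (n+1) × Fin (n+1) => p.1 < p.2 ∧ p.1 ≠ i ∧ p.2 ≠ i), (u p.2 - u p.1)
      calc (-1:R)^(n - (i:ℕ)) * u i ^ s * Vi
          = u i ^ (n+1) * ((-1:R)^(n - (i:ℕ)) * u i ^ t * Vi) := by
            conv_lhs => rw [hst]
            rw [pow_add]; ring
        _ = (- ∑ s' ∈ E, (∏ j ∈ s', (-u j)) * u i ^ (n + 1 - s'.card))
              * ((-1:R)^(n - (i:ℕ)) * u i ^ t * Vi) := by rw [← key i]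
        _ = ∑ s' ∈ E, -((∏ j ∈ s', (-u j)) *
              ((-1:R)^(n - (i:ℕ)) * u i ^ ((n + 1 - s'.card) + t) * Vi)) := by
            rw [neg_mul, Finset.sum_mul, ← Finset.sum_neg_distrib]
            apply Finset.sum_congr rfl
            intro s' _
            rw [pow_add]
            ring
    rw [Finset.sum_congr rfl (fun i _ => step1 i), Finset.sum_comm]
    have inner : ∀ s' ∈ E,
        (∑ i : Fin (n+1), -((∏ j ∈ s', (-u j)) *
            ((-1:R)^(n - (i:ℕ)) * u i ^ ((n + 1 - s'.card) + t) *
              ∏ p ∈ Finset.univ.filter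
                (fun p : Fin (n+1) × Fin (n+1) => p.1 < p.2 ∧ p.1 ≠ i ∧ p.2 ≠ i),
                  (u p.2 - u p.1))))
        = -((∏ p ∈ Finset.univ.filter (fun p : Fin (n+1) × Fin (n+1) => p.1 < p.2),
              (u p.2 - u p.1)) *
            (if s'.card ≤ t + 1 then (∏ j ∈ s', (-u j)) * H (t + 1 - s'.card) else 0)) := by
      intro s' hs'
      have hc1 : 1 ≤ s'.card :=
        Finset.card_pos.2 (Finset.nonempty_of_ne_empty (Finset.ne_of_mem_erase hs'))
      have hc2 : s'.card ≤ n + 1 := by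
        have := Finset.card_le_card (Finset.mem_powerset.1 (Finset.mem_of_mem_erase hs'))
        simpa using this
      have hlt : (n + 1 - s'.card) + t < s := by omega
      have hIH := IH _ hlt
      rw [Finset.sum_neg_distrib, ← Finset.mul_sum, hIH]
      by_cases hle : s'.card ≤ t + 1
      · rw [if_neg (by omega), if_pos hle]
        have : n + 1 - s'.card + t - n = t + 1 - s'.card := by omega
        rw [this]; ring
      · rw [if_pos (by omega), if_neg hle]
        ring
    rw [Finset.sum_congr rfl inner]
    have hrec1 := hrec (t+1) (by omega)
    have h3 := Finset.sum_erase_add _ (fun s' : Finset (Fin (n+1)) =>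
        if s'.card ≤ t + 1 then (∏ j ∈ s', (-u j)) * H (t + 1 - s'.card) else 0)
        (Finset.mem_powerset.2 (Finset.empty_subset (Finset.univ : Finset (Fin (n+1)))))
    rw [hrec1] at h3
    simp only [Finset.card_empty, Nat.zero_le, if_pos, Finset.prod_empty, Nat.sub_zero,
      one_mul] at h3
    rw [← hE] at h3
    have h4 : (∑ s' ∈ E, if s'.card ≤ t + 1 then (∏ j ∈ s', (-u j)) * H (t + 1 - s'.card) else 0)
        = - H (t+1) := by linear_combination h3
    rw [Finset.sum_neg_distrib, ← Finset.mul_sum, h4]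
    rw [if_neg (by omega)]
    have : s - n = t + 1 := by omega
    rw [this]
    ring

end S8core

namespace S8aux

/-- Homogeneity of degree `c` (without finiteness). -/
def Hom (c : ℕ) (f : MvPowerSeries σ ℚ) : Prop :=
  ∀ d : σ →₀ ℕ, MvPowerSeries.coeff (R := ℚ) d f ≠ 0 → monDeg d = c

lemma monDeg_add (a b : σ →₀ ℕ) : monDeg (a + b) = monDeg a + monDeg b := by
  classical
  exact Finsupp.sum_add_index (fun _ _ => rfl) (fun _ _ _ _ => rfl)

lemma monDeg_zero : monDeg (0 : σ →₀ ℕ) = 0 := by simp [monDeg]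

lemma monDeg_eq_zero_iff {d : σ →₀ ℕ} : monDeg d = 0 ↔ d = 0 := by
  constructor
  · intro h
    ext a
    by_contra ha
    have hmem : a ∈ d.support := Finsupp.mem_support_iff.2 (by simpa using ha)
    have hle : d a ≤ ∑ x ∈ d.support, d x :=
      Finset.single_le_sum (f := fun x => d x) (fun _ _ => Nat.zero_le _) hmem
    have hrfl : monDeg d = ∑ x ∈ d.support, d x := rfl
    rw [← hrfl] at hle
    simp only [Finsupp.coe_zero, Pi.zero_apply] at ha
    omega
  · rintro rfl; exact monDeg_zero

lemma Hom.one : Hom 0 (1 : MvPowerSeries σ ℚ) := by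
  classical
  intro d hd
  rw [MvPowerSeries.coeff_one] at hd
  by_cases h : d = 0
  · subst h; exact monDeg_zero
  · simp [h] at hd

lemma Hom.neg {c : ℕ} {f : MvPowerSeries σ ℚ} (h : Hom c f) : Hom c (-f) := by
  intro d hd
  exact h d (by rw [map_neg] at hd; exact fun h0 => hd (by rw [h0, neg_zero]))

lemma Hom.mul {c₁ c₂ : ℕ} {f g : MvPowerSeries σ ℚ} (hf : Hom c₁ f) (hg : Hom c₂ g) :
    Hom (c₁ + c₂) (f * g) := by
  classical
  intro d hd
  rw [MvPowerSeries.coeff_mul] at hd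
  obtain ⟨p, hp, hne⟩ := Finset.exists_ne_zero_of_sum_ne_zero hd
  rw [Finset.HasAntidiagonal.mem_antidiagonal] at hp
  have h1 : MvPowerSeries.coeff (R := ℚ) p.1 f ≠ 0 := left_ne_zero_of_mul hne
  have h2 : MvPowerSeries.coeff (R := ℚ) p.2 g ≠ 0 := right_ne_zero_of_mul hne
  rw [← hp, monDeg_add, hf _ h1, hg _ h2]

lemma Hom.prod {ι : Type*} (s : Finset ι) (c : ℕ) (f : ι → MvPowerSeries σ ℚ)
    (h : ∀ i ∈ s, Hom c (f i)) : Hom (c * s.card) (∏ i ∈ s, f i) := by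
  classical
  induction s using Finset.induction with
  | empty => simpa using Hom.one
  | @insert x s hx ih =>
    have hc : c * (insert x s).card = c + c * s.card := by
      rw [Finset.card_insert_of_notMem hx]; ring
    rw [Finset.prod_insert hx, hc]
    exact (h x (Finset.mem_insert_self x s)).mul (ih fun i hi => h i (Finset.mem_insert_of_mem hi))

lemma Hom.constantCoeff_eq_zero {c : ℕ} {f : MvPowerSeries σ ℚ} (hc : c ≠ 0) (h : Hom c f) :
    MvPowerSeries.constantCoeff (R := ℚ) f = 0 := by
  by_contra h0
  have h1 : MvPowerSeries.coeff (R := ℚ) (0 : σ →₀ ℕ) f ≠ 0 := by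
    rwa [MvPowerSeries.coeff_zero_eq_constantCoeff]
  have := h 0 h1
  rw [monDeg_zero] at this
  exact hc this.symm

lemma coeff_homComp (N : ℕ) (f : MvPowerSeries σ ℚ) (k : ℕ) (d : σ →₀ ℕ) :
    MvPowerSeries.coeff (R := ℚ) d (homComp N f k)
      = if monDeg d = N * k then MvPowerSeries.coeff (R := ℚ) d f else 0 := rfl

lemma homComp_sum {ι : Type*} (N : ℕ) (s : Finset ι) (f : ι → MvPowerSeries σ ℚ) (t : ℕ) :
    homComp N (∑ i ∈ s, f i) t = ∑ i ∈ s, homComp N (f i) t := by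
  apply MvPowerSeries.ext
  intro d
  rw [map_sum]
  simp only [coeff_homComp, map_sum]
  split <;> simp

lemma homComp_one (N : ℕ) (hN : 1 ≤ N) (t : ℕ) :
    homComp N (1 : MvPowerSeries σ ℚ) t = if t = 0 then 1 else 0 := by
  classical
  apply MvPowerSeries.ext
  intro d
  rw [coeff_homComp]
  by_cases ht : t = 0
  · subst ht
    rw [if_pos rfl, Nat.mul_zero]
    by_cases hd : d = 0
    · subst hd; rw [if_pos monDeg_zero]
    · rw [MvPowerSeries.coeff_one, if_neg hd]
      split <;> rfl
  · rw [if_neg ht, map_zero]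
    by_cases hd : monDeg d = N * t
    · rw [if_pos hd, MvPowerSeries.coeff_one, if_neg]
      intro h0
      subst h0
      rw [monDeg_zero] at hd
      have : N * t ≠ 0 := Nat.mul_ne_zero (by omega) ht
      omega
    · rw [if_neg hd]

lemma homComp_hom_mul (N j t : ℕ) {B : MvPowerSeries σ ℚ} (hB : Hom (N * j) B)
    (G : MvPowerSeries σ ℚ) :
    homComp N (B * G) (j + t) = B * homComp N G t := by
  classical
  apply MvPowerSeries.ext
  intro d
  rw [coeff_homComp, MvPowerSeries.coeff_mul, MvPowerSeries.coeff_mul]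
  by_cases hd : monDeg d = N * (j + t)
  · rw [if_pos hd]
    apply Finset.sum_congr rfl
    intro p hp
    rw [Finset.HasAntidiagonal.mem_antidiagonal] at hp
    by_cases h1 : MvPowerSeries.coeff (R := ℚ) p.1 B = 0
    · rw [h1, zero_mul, zero_mul]
    · have hd1 := hB _ h1
      have hadd : monDeg p.1 + monDeg p.2 = monDeg d := by rw [← monDeg_add, hp]
      have hd2 : monDeg p.2 = N * t := by
        rw [hd1, hd, Nat.mul_add] at hadd
        exact Nat.add_left_cancel hadd
      rw [coeff_homComp, if_pos hd2]
  · rw [if_neg hd]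
    symm
    apply Finset.sum_eq_zero
    intro p hp
    rw [Finset.HasAntidiagonal.mem_antidiagonal] at hp
    rw [coeff_homComp]
    by_cases h1 : MvPowerSeries.coeff (R := ℚ) p.1 B = 0
    · rw [h1, zero_mul]
    · by_cases h2 : monDeg p.2 = N * t
      · exact absurd (by rw [← hp, monDeg_add, hB _ h1, h2, Nat.mul_add]) hd
      · rw [if_neg h2, mul_zero]

lemma homComp_hom_mul_of_lt (N j t : ℕ) (hN : 1 ≤ N) {B : MvPowerSeries σ ℚ}
    (hB : Hom (N * j) B) (G : MvPowerSeries σ ℚ) (h : t < j) :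
    homComp N (B * G) t = 0 := by
  classical
  apply MvPowerSeries.ext
  intro d
  rw [coeff_homComp, map_zero]
  by_cases hd : monDeg d = N * t
  · rw [if_pos hd, MvPowerSeries.coeff_mul]
    apply Finset.sum_eq_zero
    intro p hp
    rw [Finset.HasAntidiagonal.mem_antidiagonal] at hp
    by_cases h1 : MvPowerSeries.coeff (R := ℚ) p.1 B = 0
    · rw [h1, zero_mul]
    · exfalso
      have h2 := hB _ h1
      have h3 : monDeg p.1 ≤ monDeg d := by
        rw [← hp, monDeg_add]; omega
      have h4 : N * (t + 1) ≤ N * j := Nat.mul_le_mul_left N h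
      rw [Nat.mul_add, Nat.mul_one] at h4
      rw [h2] at h3
      rw [hd] at h3
      linarith
  · rw [if_neg hd]

lemma powerset_identity (N : ℕ) (hN : 1 ≤ N) {r : ℕ} (u : Fin r → MvPowerSeries σ ℚ)
    (hu : ∀ i, Hom N (u i)) (t : ℕ) :
    (∑ s ∈ (Finset.univ : Finset (Fin r)).powerset,
       if s.card ≤ t then (∏ j ∈ s, (-u j)) * homComp N (∏ i, (1 - u i)⁻¹) (t - s.card) else 0)
    = if t = 0 then 1 else 0 := by
  classical
  have hinv : ∀ i : Fin r, (1 - u i) * (1 - u i)⁻¹ = 1 := by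
    intro i
    apply MvPowerSeries.mul_inv_cancel
    rw [map_sub, map_one, (hu i).constantCoeff_eq_zero (by omega), sub_zero]
    exact one_ne_zero
  have hPG : (∏ i, (1 - u i)) * (∏ i, (1 - u i)⁻¹) = 1 := by
    rw [← Finset.prod_mul_distrib]
    simp only [hinv]
    exact Finset.prod_const_one
  have hP : (∏ i : Fin r, (1 - u i))
      = ∑ s ∈ (Finset.univ : Finset (Fin r)).powerset, ∏ j ∈ s, (-u j) := by
    have h := Finset.prod_add (fun i : Fin r => -u i) (fun _ => (1 : MvPowerSeries σ ℚ))
      Finset.univ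
    simpa [sub_eq_neg_add] using h
  have hterm : ∀ s ∈ (Finset.univ : Finset (Fin r)).powerset,
      homComp N ((∏ j ∈ s, -u j) * (∏ i, (1 - u i)⁻¹)) t
      = if s.card ≤ t then (∏ j ∈ s, (-u j)) * homComp N (∏ i, (1 - u i)⁻¹) (t - s.card)
        else 0 := by
    intro s _
    have hcs : Hom (N * s.card) (∏ j ∈ s, -u j) := Hom.prod s N _ (fun j _ => (hu j).neg)
    by_cases hle : s.card ≤ t
    · obtain ⟨t', rfl⟩ : ∃ t', t = s.card + t' := ⟨t - s.card, by omega⟩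
      rw [if_pos hle, homComp_hom_mul N s.card t' hcs, Nat.add_sub_cancel_left]
    · rw [if_neg hle]
      exact homComp_hom_mul_of_lt N s.card t hN hcs _ (by omega)
  calc (∑ s ∈ (Finset.univ : Finset (Fin r)).powerset,
            if s.card ≤ t then (∏ j ∈ s, (-u j)) * homComp N (∏ i, (1 - u i)⁻¹) (t - s.card)
            else 0)
      = ∑ s ∈ (Finset.univ : Finset (Fin r)).powerset,
          homComp N ((∏ j ∈ s, -u j) * (∏ i, (1 - u i)⁻¹)) t :=
        (Finset.sum_congr rfl hterm).symm
    _ = homComp N ((∑ s ∈ (Finset.univ : Finset (Fin r)).powerset, ∏ j ∈ s, (-u j))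
          * (∏ i, (1 - u i)⁻¹)) t := by
        rw [Finset.sum_mul, homComp_sum]
    _ = homComp N (1 : MvPowerSeries σ ℚ) t := by rw [← hP, hPG]
    _ = if t = 0 then 1 else 0 := homComp_one N hN t

lemma H_zero (N : ℕ) (hN : 1 ≤ N) {r : ℕ} (u : Fin r → MvPowerSeries σ ℚ)
    (hu : ∀ i, Hom N (u i)) :
    homComp N (∏ i, (1 - u i)⁻¹) 0 = 1 := by
  classical
  have h := powerset_identity N hN u hu 0
  rw [Finset.sum_eq_single (∅ : Finset (Fin r))] at h
  · simpa using h
  · intro s _ hne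
    rw [if_neg]
    simp only [Nat.le_zero, Finset.card_eq_zero]
    exact hne
  · intro h'
    exact absurd (Finset.mem_powerset.2 (Finset.empty_subset _)) h'

end S8aux


/-- with denominators cleared,
`(∏_{p<q} (u_q - u_p)) · E(a_1⋯a_k ∏_i (1-u_i)⁻¹)
  = a_1⋯a_k Σ_i (-1)^{r-i} u_i^{r-k-1} exp(q·u_i) ∏_{p<q, p,q≠i} (u_q - u_p)`
(indices `1,…,r`; here `i : Fin r` corresponds to `i+1`, so the sign is `(-1)^(r-1-i)`). -/
theorem Etrans_mul_prod_inv_one_sub {σ : Type*} (N : ℕ) (hN : 1 ≤ N)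
    (r : ℕ) (hr : 1 ≤ r) (k : ℕ) (hk : k < r)
    (u : Fin r → MvPowerSeries σ ℚ) (a : Fin k → MvPowerSeries σ ℚ)
    (hu : ∀ i, IsHomogDeg N (u i)) (ha : ∀ i, IsHomogDeg N (a i))
    (huinj : Function.Injective u) :
    PowerSeries.C (R := MvPowerSeries σ ℚ)
        (∏ p ∈ Finset.univ.filter (fun p : Fin r × Fin r => p.1 < p.2), (u p.2 - u p.1)) *
      Etrans N ((∏ i, a i) * ∏ i, (1 - u i)⁻¹) =
    PowerSeries.C (R := MvPowerSeries σ ℚ) (∏ i, a i) *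
      ∑ i : Fin r, (-1 : PowerSeries (MvPowerSeries σ ℚ)) ^ (r - 1 - (i : ℕ)) *
        PowerSeries.C (R := MvPowerSeries σ ℚ)
          (u i ^ (r - k - 1) *
            ∏ p ∈ Finset.univ.filter
                (fun p : Fin r × Fin r => p.1 < p.2 ∧ p.1 ≠ i ∧ p.2 ≠ i),
              (u p.2 - u p.1)) *
        expQ (u i) := by
  classical
  obtain ⟨n, rfl⟩ : ∃ n, r = n + 1 := ⟨r - 1, by omega⟩
  have huH : ∀ i, S8aux.Hom N (u i) := fun i => (hu i).2
  have hAH : S8aux.Hom (N * k) (∏ i, a i) := by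
    have h := S8aux.Hom.prod (Finset.univ : Finset (Fin k)) N a (fun i _ => (ha i).2)
    simpa [Finset.card_univ] using h
  set Vi : Fin (n+1) → MvPowerSeries σ ℚ := fun i =>
    ∏ p ∈ Finset.univ.filter
      (fun p : Fin (n+1) × Fin (n+1) => p.1 < p.2 ∧ p.1 ≠ i ∧ p.2 ≠ i), (u p.2 - u p.1)
    with hVi
  set V : MvPowerSeries σ ℚ :=
    ∏ p ∈ Finset.univ.filter (fun p : Fin (n+1) × Fin (n+1) => p.1 < p.2), (u p.2 - u p.1)
    with hV
  have main : ∀ m : ℕ,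
      V * homComp N ((∏ i, a i) * ∏ i, (1 - u i)⁻¹) m
      = (∏ i, a i) * ∑ i : Fin (n+1), (-1 : MvPowerSeries σ ℚ) ^ (n - (i:ℕ))
          * u i ^ ((n + 1 - k - 1) + m) * Vi i := by
    intro m
    have hcore := core_alternant n u (fun t => homComp N (∏ i, (1 - u i)⁻¹) t)
      (S8aux.H_zero N hN u huH)
      (fun t ht => by
        have h := S8aux.powerset_identity N hN u huH t
        rwa [if_neg (by omega)] at h)
      ((n + 1 - k - 1) + m)
    rw [hVi, hV] at *
    rw [hcore]
    by_cases hm : m < k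
    · rw [if_pos (by omega), mul_zero,
        S8aux.homComp_hom_mul_of_lt N k m hN hAH _ hm, mul_zero]
    · rw [if_neg (by omega)]
      obtain ⟨m', rfl⟩ : ∃ m', m = k + m' := ⟨m - k, by omega⟩
      rw [S8aux.homComp_hom_mul N k m' hAH]
      have harith : n + 1 - k - 1 + (k + m') - n = m' := by omega
      rw [harith]
      ring
  have hsum : (∑ i : Fin (n+1), (-1 : PowerSeries (MvPowerSeries σ ℚ)) ^ (n + 1 - 1 - (i : ℕ)) *
        PowerSeries.C (R := MvPowerSeries σ ℚ) (u i ^ (n + 1 - k - 1) * Vi i) * expQ (u i))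
      = ∑ i : Fin (n+1), PowerSeries.C (R := MvPowerSeries σ ℚ)
          ((-1 : MvPowerSeries σ ℚ) ^ (n - (i:ℕ)) * (u i ^ (n + 1 - k - 1) * Vi i))
          * expQ (u i) := by
    apply Finset.sum_congr rfl
    intro i _
    rw [Nat.add_sub_cancel]
    conv_rhs => rw [map_mul, map_pow, map_neg, map_one]
  rw [hsum]
  apply PowerSeries.ext
  intro m
  rw [PowerSeries.coeff_C_mul, PowerSeries.coeff_C_mul, map_sum]
  have hterm : ∀ i : Fin (n+1),
      (PowerSeries.coeff (R := MvPowerSeries σ ℚ) m)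
        (PowerSeries.C (R := MvPowerSeries σ ℚ)
          ((-1 : MvPowerSeries σ ℚ) ^ (n - (i:ℕ)) * (u i ^ (n + 1 - k - 1) * Vi i))
          * expQ (u i))
      = ((m.factorial : ℚ))⁻¹ • ((-1 : MvPowerSeries σ ℚ) ^ (n - (i:ℕ))
          * u i ^ ((n + 1 - k - 1) + m) * Vi i) := by
    intro i
    rw [PowerSeries.coeff_C_mul, expQ, PowerSeries.coeff_mk, mul_smul_comm]
    congr 1
    rw [pow_add]
    ring
  rw [Finset.sum_congr rfl (fun i _ => hterm i), ← Finset.smul_sum]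
  rw [Etrans, PowerSeries.coeff_mk, mul_smul_comm, mul_smul_comm]
  exact congrArg _ (main m)
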